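/- arXiv:2404.17175 — 2 statements merged into one kernel-verified Lean document; each statement's English description precedes it below -/
import Mathlib

section
/- Let N ≥ 1 and let f : Fin N → ℂ. There exists a vector θ : Fin N → ℂ with |θ_n| = 1 for every n such that ∑_{n} conj(θ_n) · f_n = 0 if and only if 2 · max_n |f_n| ≤ ∑_n |f_n|. -/
lemma triangle_close (x y z : ℝ) (hx : 0 ≤ x) (hy : 0 ≤ y) (hz : 0 ≤ z)
    (h1 : x ≤ y + z) (h2 : y ≤ x + z) (h3 : z ≤ x + y) :
    ∃ u v : ℂ, ‖u‖ = 1 ∧ ‖v‖ = 1 ∧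
      (x : ℂ) + y * u + z * v = 0 := by
  rcases eq_or_lt_of_le hx with hx0 | hx0
  · -- x = 0, then y = z
    have hyz : y = z := by linarith
    exact ⟨1, -1, by simp, by simp, by rw [← hx0, hyz]; push_cast; ring⟩
  rcases eq_or_lt_of_le hy with hy0 | hy0
  · have hxz : x = z := by linarith
    exact ⟨1, -1, by simp, by simp, by rw [← hy0, hxz]; push_cast; ring⟩
  rcases eq_or_lt_of_le hz with hz0 | hz0
  · have hxy : x = y := by linarith
    exact ⟨-1, 1, by simp, by simp, by rw [← hz0, hxy]; push_cast; ring⟩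
  set c : ℝ := (z^2 - x^2 - y^2)/(2*x*y) with hc
  have hxy0 : 0 < 2*x*y := by positivity
  have hc1 : c ≤ 1 := by
    rw [hc, div_le_one hxy0]; nlinarith
  have hc2 : -1 ≤ c := by
    rw [hc, le_div_iff₀ hxy0]; nlinarith
  have hs : Real.sqrt (1 - c^2) ^ 2 = 1 - c^2 := Real.sq_sqrt (by nlinarith)
  set u : ℂ := ⟨c, Real.sqrt (1 - c^2)⟩ with hu
  have hnu : Complex.normSq u = 1 := by
    simp [Complex.normSq_mk, hu, ← sq, hs]
  have hau : ‖u‖ = 1 := by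
    rw [Complex.norm_def, hnu, Real.sqrt_one]
  set w : ℂ := (x : ℂ) + y * u with hw
  have hnw : Complex.normSq w = z^2 := by
    have : w = ⟨x + y*c, y * Real.sqrt (1 - c^2)⟩ := by
      rw [hw, hu, Complex.ext_iff]
      constructor <;> simp
    rw [this, Complex.normSq_mk]
    have : (y * Real.sqrt (1 - c^2))^2 = y^2 * (1 - c^2) := by
      rw [mul_pow, hs]
    rw [← sq, ← sq] at *
    have expand : (x + y*c)^2 + (y * Real.sqrt (1-c^2))^2 = x^2 + 2*x*y*c + y^2 := by
      rw [this]; ring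
    rw [expand, hc]
    field_simp
    ring
  have haw : ‖w‖ = z := by
    rw [Complex.norm_def, hnw]
    exact Real.sqrt_sq hz
  refine ⟨u, -(w / z), hau, ?_, ?_⟩
  · rw [norm_neg, norm_div, haw, Complex.norm_real, Real.norm_eq_abs, abs_of_nonneg hz,
      div_self (ne_of_gt hz0)]
  · have hzne : (z : ℂ) ≠ 0 := by exact_mod_cast ne_of_gt hz0
    field_simp [hw]
    ring

lemma subset_select {N : ℕ} (a : Fin N → ℝ) (ha : ∀ n, 0 ≤ a n) (i₀ : Fin N)
    (hmax : ∀ n, a n ≤ a i₀) :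
    ∃ T ⊆ Finset.univ.erase i₀,
      (∑ n, a n)/2 - a i₀ ≤ ∑ n ∈ T, a n ∧ ∑ n ∈ T, a n ≤ (∑ n, a n)/2 := by
  set s := ∑ n, a n with hs
  have hs0 : 0 ≤ s := Finset.sum_nonneg fun n _ => ha n
  set S := (Finset.univ.erase i₀).powerset.filter (fun T => ∑ n ∈ T, a n ≤ s/2) with hS
  have hne : S.Nonempty := ⟨∅, by simp [hS]; positivity⟩
  obtain ⟨T, hT, hTmax⟩ := S.exists_max_image (fun T => ∑ n ∈ T, a n) hne
  simp only [hS, Finset.mem_filter, Finset.mem_powerset] at hT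
  refine ⟨T, hT.1, ?_, hT.2⟩
  by_contra hlt
  push_neg at hlt
  -- complement sum is positive
  have hsplit : ∑ n ∈ (Finset.univ.erase i₀) \ T, a n + ∑ n ∈ T, a n
      = ∑ n ∈ Finset.univ.erase i₀, a n := Finset.sum_sdiff hT.1
  have herase : ∑ n ∈ Finset.univ.erase i₀, a n = s - a i₀ := by
    have := Finset.add_sum_erase Finset.univ a (Finset.mem_univ i₀)
    rw [hs]; linarith
  have hcompl : 0 < ∑ n ∈ (Finset.univ.erase i₀) \ T, a n := by linarith
  obtain ⟨e, he, hae⟩ : ∃ e ∈ (Finset.univ.erase i₀) \ T, 0 < a e := by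
    by_contra hno
    push_neg at hno
    have : ∑ n ∈ (Finset.univ.erase i₀) \ T, a n ≤ 0 :=
      Finset.sum_nonpos fun n hn => hno n hn
    linarith
  have heT : e ∉ T := (Finset.mem_sdiff.mp he).2
  have heE : e ∈ Finset.univ.erase i₀ := (Finset.mem_sdiff.mp he).1
  have hins : insert e T ∈ S := by
    simp only [hS, Finset.mem_filter, Finset.mem_powerset]
    refine ⟨Finset.insert_subset heE hT.1, ?_⟩
    rw [Finset.sum_insert heT]
    have := hmax e
    linarith
  have := hTmax _ hins
  rw [Finset.sum_insert heT] at this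
  linarith

theorem zf_forward (N : ℕ) (f : Fin N → ℂ) (θ : Fin N → ℂ)
    (hθ : ∀ n, ‖θ n‖ = 1)
    (hsum : ∑ n, (starRingEnd ℂ) (θ n) * f n = 0) (m : Fin N) :
    2 * ‖f m‖ ≤ ∑ n, ‖f n‖ := by
  have key : (starRingEnd ℂ) (θ m) * f m
      = -∑ n ∈ Finset.univ.erase m, (starRingEnd ℂ) (θ n) * f n := by
    have := Finset.add_sum_erase Finset.univ (fun n => (starRingEnd ℂ) (θ n) * f n)
      (Finset.mem_univ m)
    rw [hsum] at this
    linear_combination this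
  have h1 : ‖f m‖
      ≤ ∑ n ∈ Finset.univ.erase m, ‖f n‖ := by
    calc ‖f m‖ = ‖(starRingEnd ℂ) (θ m) * f m‖ := by
          rw [norm_mul, Complex.norm_conj, hθ, one_mul]
      _ = ‖∑ n ∈ Finset.univ.erase m, (starRingEnd ℂ) (θ n) * f n‖ := by
          rw [key, norm_neg]
      _ ≤ ∑ n ∈ Finset.univ.erase m, ‖(starRingEnd ℂ) (θ n) * f n‖ :=
          norm_sum_le _ _
      _ = ∑ n ∈ Finset.univ.erase m, ‖f n‖ := by
          refine Finset.sum_congr rfl fun n _ => ?_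
          rw [norm_mul, Complex.norm_conj, hθ, one_mul]
  have h2 := Finset.add_sum_erase Finset.univ (fun n => ‖f n‖)
    (Finset.mem_univ m)
  linarith
theorem zf_backward (N : ℕ) (f : Fin N → ℂ) (i₀ : Fin N)
    (hmax : ∀ n, ‖f n‖ ≤ ‖f i₀‖)
    (h : 2 * ‖f i₀‖ ≤ ∑ n, ‖f n‖) :
    ∃ θ : Fin N → ℂ, (∀ n, ‖θ n‖ = 1) ∧
        ∑ n, (starRingEnd ℂ) (θ n) * f n = 0 := by
  set a : Fin N → ℝ := fun n => ‖f n‖ with ha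
  have ha0 : ∀ n, 0 ≤ a n := fun n => norm_nonneg _
  set s := ∑ n, a n with hs
  obtain ⟨T, hTsub, hT1, hT2⟩ := subset_select a ha0 i₀ hmax
  set R := (Finset.univ.erase i₀) \ T with hR
  set x := a i₀ with hx
  set y := ∑ n ∈ T, a n with hy
  set z := ∑ n ∈ R, a n with hz
  have hy0 : 0 ≤ y := Finset.sum_nonneg fun n _ => ha0 n
  have hz0 : 0 ≤ z := Finset.sum_nonneg fun n _ => ha0 n
  have hsplit : z + y = ∑ n ∈ Finset.univ.erase i₀, a n := Finset.sum_sdiff hTsub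
  have herase : x + ∑ n ∈ Finset.univ.erase i₀, a n = s :=
    Finset.add_sum_erase Finset.univ a (Finset.mem_univ i₀)
  have hxyz : x + y + z = s := by linarith
  obtain ⟨u, v, hu, hv, huv⟩ := triangle_close x y z (ha0 i₀) hy0 hz0
    (by linarith) (by linarith) (by linarith)
  set w : Fin N → ℂ := fun n => if n = i₀ then 1 else if n ∈ T then u else v with hw
  have hwabs : ∀ n, ‖w n‖ = 1 := by
    intro n
    rw [hw]
    dsimp only
    split_ifs <;> simp [hu, hv]
  refine ⟨fun n => if f n = 0 then 1 else (f n / (a n : ℂ)) * (starRingEnd ℂ) (w n),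
    fun n => ?_, ?_⟩
  · by_cases h0 : f n = 0
    · simp [h0]
    · have han : a n ≠ 0 := by simpa [ha] using h0
      simp only [if_neg h0, norm_mul, norm_div, Complex.norm_conj, Complex.norm_real, Real.norm_eq_abs,
        abs_of_nonneg (ha0 n), hwabs, mul_one]
      rw [div_self han]
  · have key : ∀ n, (starRingEnd ℂ) (if f n = 0 then 1 else
        (f n / (a n : ℂ)) * (starRingEnd ℂ) (w n)) * f n = (a n : ℂ) * w n := by
      intro n
      by_cases h0 : f n = 0
      · simp [h0, ha]
      · have han : a n ≠ 0 := by simpa [ha] using h0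
        have hanC : (a n : ℂ) ≠ 0 := by exact_mod_cast han
        simp only [if_neg h0, map_mul, map_div₀, RingHomCompTriple.comp_apply,
          RingHom.id_apply, Complex.conj_ofReal]
        have : (starRingEnd ℂ) (f n) * f n = (a n : ℂ)^2 := by
          rw [mul_comm, Complex.mul_conj, Complex.normSq_eq_norm_sq]
          push_cast [ha]
          ring
        field_simp
        linear_combination w n * this
    rw [Finset.sum_congr rfl fun n _ => key n]
    rw [← Finset.add_sum_erase Finset.univ (fun n => (a n : ℂ) * w n) (Finset.mem_univ i₀),
      ← Finset.sum_sdiff hTsub]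
    have e1 : (a i₀ : ℂ) * w i₀ = (x : ℂ) := by simp [hw, hx]
    have e2 : ∑ n ∈ T, (a n : ℂ) * w n = (y : ℂ) * u := by
      rw [hy]
      push_cast
      rw [Finset.sum_mul]
      refine Finset.sum_congr rfl fun n hn => ?_
      have hni : n ≠ i₀ := Finset.ne_of_mem_erase (hTsub hn)
      simp [hw, hni, hn]
    have e3 : ∑ n ∈ (Finset.univ.erase i₀) \ T, (a n : ℂ) * w n = (z : ℂ) * v := by
      rw [hz, hR]
      push_cast
      rw [Finset.sum_mul]
      refine Finset.sum_congr rfl fun n hn => ?_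
      have hni : n ≠ i₀ := Finset.ne_of_mem_erase (Finset.mem_sdiff.mp hn).1
      have hnT : n ∉ T := (Finset.mem_sdiff.mp hn).2
      simp [hw, hni, hnT]
    rw [e1, e2, e3]
    linear_combination huv


/-- Lemma 1 (feasibility of zero-forcing with unit-modulus RIS phase shifts):
there exists a unit-modulus vector `θ` with `θᴴ f = 0` iff `2‖f‖_∞ ≤ ‖f‖₁`. -/
theorem zf_feasibility (N : ℕ) (hN : 1 ≤ N) (f : Fin N → ℂ) :
    (∃ θ : Fin N → ℂ, (∀ n, ‖θ n‖ = 1) ∧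
        ∑ n, (starRingEnd ℂ) (θ n) * f n = 0) ↔
      2 * Finset.univ.sup' (Finset.univ_nonempty_iff.mpr ⟨⟨0, hN⟩⟩)
          (fun n => ‖f n‖) ≤ ∑ n, ‖f n‖ := by
  obtain ⟨i₀, -, hi⟩ := Finset.exists_mem_eq_sup'
    (Finset.univ_nonempty_iff.mpr ⟨(⟨0, hN⟩ : Fin N)⟩) (fun n => ‖f n‖)
  constructor
  · rintro ⟨θ, hθ, hsum⟩
    rw [hi]
    exact zf_forward N f θ hθ hsum i₀
  · intro h
    rw [hi] at h
    exact zf_backward N f i₀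
      (fun n => hi ▸ Finset.le_sup' (fun n => ‖f n‖) (Finset.mem_univ n)) h
end

section
/- Let A_s ⊆ ℂ be a finite set closed under negation and containing some element s₀ with |s₀| = 1, let A_c = {1, −1} ⊆ ℂ, and let h, r ∈ ℂ. Define x(s, c) := h·s + r·s·c for s ∈ A_s, c ∈ A_c. Then the minimum squared Euclidean distance over distinct primary symbols, min over {(s_i, c_m, s_j, c_k) ∈ A_s × A_c × A_s × A_c : s_i ≠ s_j} of |x(s_i, c_m) − x(s_j, c_k)|², is at most 4|h|², for every value of r. -/
/-- BER error floor (Fundamental problem 2): for the conventional scheme the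
composite signal is `x(s,c) = h·s + r·s·c`, and the minimum squared Euclidean
distance over pairs with distinct primary symbols is at most `4|h|²`,
independently of the reflecting-link coefficient `r`. -/
theorem ber_error_floor (As : Finset ℂ)
    (hneg : ∀ s ∈ As, -s ∈ As) (h1 : ∃ s ∈ As, ‖s‖ = 1)
    (h r : ℂ) :
    sInf {x : ℝ | ∃ si ∈ As, ∃ sj ∈ As,
        ∃ cm ∈ ({1, -1} : Finset ℂ), ∃ ck ∈ ({1, -1} : Finset ℂ),
        si ≠ sj ∧
          x = ‖(h * si + r * si * cm) - (h * sj + r * sj * ck)‖ ^ 2}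
      ≤ 4 * ‖h‖ ^ 2 := by
  obtain ⟨s0, hs0, habs⟩ := h1
  have hs0ne : s0 ≠ 0 := by
    intro hz; rw [hz] at habs; simp at habs
  have hmem : (4 * ‖h‖ ^ 2) ∈ {x : ℝ | ∃ si ∈ As, ∃ sj ∈ As,
        ∃ cm ∈ ({1, -1} : Finset ℂ), ∃ ck ∈ ({1, -1} : Finset ℂ),
        si ≠ sj ∧
          x = ‖(h * si + r * si * cm) - (h * sj + r * sj * ck)‖ ^ 2} := by
    refine ⟨s0, hs0, -s0, hneg s0 hs0, 1, by simp, -1, by simp, ?_, ?_⟩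
    · intro heq
      exact hs0ne (by linear_combination heq / 2)
    · have : (h * s0 + r * s0 * 1) - (h * (-s0) + r * (-s0) * (-1)) = 2 * h * s0 := by
        ring
      rw [this]
      simp [map_mul, habs, mul_pow]
      norm_num
  refine csInf_le ⟨0, ?_⟩ hmem
  rintro x ⟨si, _, sj, _, cm, _, ck, _, _, rfl⟩
  positivity
end
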